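/- Let H be a separable real Hilbert space and N, β > 0. Then there exists a constant C > 0, depending only on N and β, such that for all Borel probability measures ν₁, ν₂, ν₃ on H, W_{d_{N,β/2}}(ν₁, ν₃) ≤ C ( W_{d_{N,β}}(ν₁, ν₂) + W_{d_{N,β}}(ν₂, ν₃) ), where W_d denotes the coupling distance associated with the cost d. -/
import Mathlib

open MeasureTheory
open scoped ENNReal ProbabilityTheory
set_option maxHeartbeats 1600000

noncomputable section

variable {H : Type*} [NormedAddCommGroup H] [InnerProductSpace ℝ H]

/-- The distance-like function `d_{N,β}` on `H`. -/
def dH (N β : ℝ) (u v : H) : ℝ :=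
  Real.sqrt (min (N * ‖u - v‖) 1 *
    (1 + Real.exp (β / 2 * ‖u‖ ^ 2) + Real.exp (β / 2 * ‖v‖ ^ 2)))

/-- The coupling (Wasserstein-type) distance associated with a cost `d`. -/
def Wd {E : Type*} [MeasurableSpace E] (μ ν : Measure E) (d : E → E → ℝ) : ℝ≥0∞ :=
  sInf { r : ℝ≥0∞ | ∃ π : Measure (E × E), IsProbabilityMeasure π ∧
    π.map Prod.fst = μ ∧ π.map Prod.snd = ν ∧
    r = ∫⁻ p, ENNReal.ofReal (d p.1 p.2) ∂π }

lemma dH_nonneg (N β : ℝ) (u v : H) : 0 ≤ dH N β u v := Real.sqrt_nonneg _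

lemma min1_add {x y z : ℝ} (h : x ≤ y + z) (hy : 0 ≤ y) (hz : 0 ≤ z) :
    min x 1 ≤ min y 1 + min z 1 := by
  rcases le_or_gt 1 y with hy1 | hy1
  · have h1 : min y 1 = 1 := min_eq_right hy1
    have h2 := min_le_right x 1
    have h3 : (0:ℝ) ≤ min z 1 := le_min hz zero_le_one
    linarith
  rcases le_or_gt 1 z with hz1 | hz1
  · have h1 : min z 1 = 1 := min_eq_right hz1
    have h2 := min_le_right x 1
    have h3 : (0:ℝ) ≤ min y 1 := le_min hy zero_le_one
    linarith
  · rw [min_eq_left hy1.le, min_eq_left hz1.le]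
    exact le_trans (min_le_left x 1) h

/-- Abstract core inequality over the reals. -/
lemma core_ineq (a b m A B eu ew C₀ : ℝ)
    (ha0 : 0 ≤ a) (hb0 : 0 ≤ b) (hm0 : 0 ≤ m) (heu0 : 0 ≤ eu) (hew0 : 0 ≤ ew)
    (hA1 : 1 ≤ A) (hB1 : 1 ≤ B) (hC : 1 ≤ C₀) (hm : m ≤ a + b)
    (heuA : eu ≤ A) (hewB : ew ≤ B)
    (hbeu : b * eu ≤ C₀ * (a * A + b * B)) (haew : a * ew ≤ C₀ * (a * A + b * B)) :
    Real.sqrt (m * (1 + eu + ew)) ≤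
      Real.sqrt (6 * C₀) * (Real.sqrt (a * A) + Real.sqrt (b * B)) := by
  have hA0 : 0 ≤ A := le_trans zero_le_one hA1
  have hB0 : 0 ≤ B := le_trans zero_le_one hB1
  have hS0 : 0 ≤ a * A + b * B := by positivity
  have main : m * (1 + eu + ew) ≤ 6 * C₀ * (a * A + b * B) := by
    have h1 : m * eu ≤ a * eu + b * eu := by
      nlinarith [mul_nonneg (by linarith : (0:ℝ) ≤ a + b - m) heu0]
    have h2 : m * ew ≤ a * ew + b * ew := by
      nlinarith [mul_nonneg (by linarith : (0:ℝ) ≤ a + b - m) hew0]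
    have h3 : a * eu ≤ a * A := mul_le_mul_of_nonneg_left heuA ha0
    have h4 : b * ew ≤ b * B := mul_le_mul_of_nonneg_left hewB hb0
    have h5 : a ≤ a * A := by nlinarith [mul_le_mul_of_nonneg_left hA1 ha0]
    have h6 : b ≤ b * B := by nlinarith [mul_le_mul_of_nonneg_left hB1 hb0]
    have h7 : a * A + b * B ≤ C₀ * (a * A + b * B) := by
      nlinarith [mul_nonneg (by linarith : (0:ℝ) ≤ C₀ - 1) hS0]
    linarith
  have step1 : Real.sqrt (m * (1 + eu + ew)) ≤ Real.sqrt (6 * C₀ * (a * A + b * B)) :=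
    Real.sqrt_le_sqrt main
  have step2 : Real.sqrt (6 * C₀ * (a * A + b * B))
      = Real.sqrt (6 * C₀) * Real.sqrt (a * A + b * B) :=
    Real.sqrt_mul (by positivity) _
  have step3 : Real.sqrt (a * A + b * B) ≤ Real.sqrt (a * A) + Real.sqrt (b * B) := by
    have hx : 0 ≤ a * A := mul_nonneg ha0 hA0
    have hy : 0 ≤ b * B := mul_nonneg hb0 hB0
    have h := Real.sqrt_le_sqrt
      (show a * A + b * B ≤ (Real.sqrt (a * A) + Real.sqrt (b * B)) ^ 2 by
        nlinarith [Real.sq_sqrt hx, Real.sq_sqrt hy,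
          Real.sqrt_nonneg (a * A), Real.sqrt_nonneg (b * B)])
    rwa [Real.sqrt_sq (by positivity)] at h
  calc Real.sqrt (m * (1 + eu + ew)) ≤ Real.sqrt (6 * C₀) * Real.sqrt (a * A + b * B) := by
        rw [← step2]; exact step1
    _ ≤ Real.sqrt (6 * C₀) * (Real.sqrt (a * A) + Real.sqrt (b * B)) := by
        have h0 := Real.sqrt_nonneg (6 * C₀)
        nlinarith

lemma side_one {b eu A B C₀ : ℝ} (hb0 : 0 ≤ b) (hb1 : b ≤ 1) (heu0 : 0 ≤ eu)
    (hA0 : 0 ≤ A) (hB0 : 0 ≤ B) (hC : 1 ≤ C₀) (heuA : eu ≤ A) :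
    b * eu ≤ C₀ * (1 * A + b * B) := by
  have h1 : b * eu ≤ eu := by nlinarith [mul_le_mul_of_nonneg_right hb1 heu0]
  have h2 : A + b * B ≤ C₀ * (A + b * B) := by
    nlinarith [mul_le_mul_of_nonneg_right hC
      (by positivity : (0:ℝ) ≤ A + b * B)]
  have h3 : 0 ≤ b * B := mul_nonneg hb0 hB0
  nlinarith

lemma side_two {a b eu A B C₀ : ℝ} (ha0 : 0 ≤ a) (hb0 : 0 ≤ b)
    (hA0 : 0 ≤ A) (hC0 : 0 ≤ C₀) (h3 : eu ≤ C₀ * B) :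
    b * eu ≤ C₀ * (a * A + b * B) := by
  nlinarith [mul_le_mul_of_nonneg_left h3 hb0,
    mul_nonneg (mul_nonneg hC0 ha0) hA0]

/-- Pointwise generalized triangle inequality for `dH`. -/
lemma dH_triangle (N β : ℝ) (hN : 0 < N) (hβ : 0 < β) (u v w : H) :
    dH N (β / 2) u w ≤
      Real.sqrt (6 * Real.exp (β / (2 * N ^ 2))) * (dH N β u v + dH N β v w) := by
  have hC : (1:ℝ) ≤ Real.exp (β / (2 * N ^ 2)) := Real.one_le_exp (by positivity)
  -- key exponential estimate
  have key : ∀ x y : H, ‖x - y‖ ≤ 1 / N →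
      Real.exp (β / 2 / 2 * ‖x‖ ^ 2) ≤
        Real.exp (β / (2 * N ^ 2)) * Real.exp (β / 2 * ‖y‖ ^ 2) := by
    intro x y hxy
    have hx : ‖x‖ ≤ ‖y‖ + 1 / N := by
      have := norm_sub_norm_le x y
      linarith
    have hsq : ‖x‖ ^ 2 ≤ 2 * ‖y‖ ^ 2 + 2 * (1 / N) ^ 2 := by
      have h2 : ‖x‖ ^ 2 ≤ (‖y‖ + 1 / N) ^ 2 := by
        have := pow_le_pow_left₀ (norm_nonneg x) hx 2
        simpa using this
      nlinarith [sq_nonneg (‖y‖ - 1 / N)]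
    have hexp : β / 2 / 2 * ‖x‖ ^ 2 ≤ β / (2 * N ^ 2) + β / 2 * ‖y‖ ^ 2 := by
      have h3 := mul_le_mul_of_nonneg_left hsq (by positivity : (0:ℝ) ≤ β / 4)
      have h4 : β / 4 * (2 * ‖y‖ ^ 2 + 2 * (1 / N) ^ 2)
          = β / 2 * ‖y‖ ^ 2 + β / (2 * N ^ 2) := by
        field_simp
        ring
      linarith
    calc Real.exp (β / 2 / 2 * ‖x‖ ^ 2)
        ≤ Real.exp (β / (2 * N ^ 2) + β / 2 * ‖y‖ ^ 2) := Real.exp_le_exp.mpr hexp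
      _ = _ := Real.exp_add _ _
  show Real.sqrt (min (N * ‖u - w‖) 1 *
      (1 + Real.exp (β / 2 / 2 * ‖u‖ ^ 2) + Real.exp (β / 2 / 2 * ‖w‖ ^ 2))) ≤ _
  refine core_ineq (min (N * ‖u - v‖) 1) (min (N * ‖v - w‖) 1) (min (N * ‖u - w‖) 1)
    (1 + Real.exp (β / 2 * ‖u‖ ^ 2) + Real.exp (β / 2 * ‖v‖ ^ 2))
    (1 + Real.exp (β / 2 * ‖v‖ ^ 2) + Real.exp (β / 2 * ‖w‖ ^ 2))
    (Real.exp (β / 2 / 2 * ‖u‖ ^ 2)) (Real.exp (β / 2 / 2 * ‖w‖ ^ 2))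
    (Real.exp (β / (2 * N ^ 2)))
    (le_min (by positivity) zero_le_one) (le_min (by positivity) zero_le_one)
    (le_min (by positivity) zero_le_one) (Real.exp_pos _).le (Real.exp_pos _).le
    ?_ ?_ hC ?_ ?_ ?_ ?_ ?_
  · nlinarith [(Real.exp_pos (β / 2 * ‖u‖ ^ 2)).le, (Real.exp_pos (β / 2 * ‖v‖ ^ 2)).le]
  · nlinarith [(Real.exp_pos (β / 2 * ‖v‖ ^ 2)).le, (Real.exp_pos (β / 2 * ‖w‖ ^ 2)).le]
  · refine min1_add ?_ (by positivity) (by positivity)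
    have := norm_sub_le_norm_sub_add_norm_sub u v w
    nlinarith
  · have h1 : β / 2 / 2 * ‖u‖ ^ 2 ≤ β / 2 * ‖u‖ ^ 2 := by nlinarith [sq_nonneg ‖u‖]
    have := Real.exp_le_exp.mpr h1
    have := (Real.exp_pos (β / 2 * ‖v‖ ^ 2)).le
    linarith
  · have h1 : β / 2 / 2 * ‖w‖ ^ 2 ≤ β / 2 * ‖w‖ ^ 2 := by nlinarith [sq_nonneg ‖w‖]
    have := Real.exp_le_exp.mpr h1
    have := (Real.exp_pos (β / 2 * ‖v‖ ^ 2)).le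
    linarith
  · -- b * eu ≤ C₀ * (a A + b B)
    rcases le_or_gt 1 (N * ‖u - v‖) with h | h
    · rw [min_eq_right h]
      refine side_one (le_min (by positivity) zero_le_one) (min_le_right _ _)
        (Real.exp_pos _).le (by positivity) (by positivity) hC ?_
      have h1 : β / 2 / 2 * ‖u‖ ^ 2 ≤ β / 2 * ‖u‖ ^ 2 := by nlinarith [sq_nonneg ‖u‖]
      have h2 := Real.exp_le_exp.mpr h1
      have h3 := (Real.exp_pos (β / 2 * ‖v‖ ^ 2)).le
      linarith
    · have huv : ‖u - v‖ ≤ 1 / N := by rw [le_div_iff₀ hN]; linarith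
      refine side_two (le_min (by positivity) zero_le_one)
        (le_min (by positivity) zero_le_one) (by positivity) (by positivity) ?_
      have h1 := key u v huv
      have h2 := (Real.exp_pos (β / 2 * ‖w‖ ^ 2)).le
      have h4 : (0:ℝ) ≤ Real.exp (β / (2 * N ^ 2)) := (Real.exp_pos _).le
      nlinarith
  · -- a * ew ≤ C₀ * (a A + b B)
    rcases le_or_gt 1 (N * ‖v - w‖) with h | h
    · rw [min_eq_right h]
      have hgoal := side_one (b := min (N * ‖u - v‖) 1)
        (eu := Real.exp (β / 2 / 2 * ‖w‖ ^ 2))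
        (A := 1 + Real.exp (β / 2 * ‖v‖ ^ 2) + Real.exp (β / 2 * ‖w‖ ^ 2))
        (B := 1 + Real.exp (β / 2 * ‖u‖ ^ 2) + Real.exp (β / 2 * ‖v‖ ^ 2))
        (C₀ := Real.exp (β / (2 * N ^ 2)))
        (le_min (by positivity) zero_le_one) (min_le_right _ _)
        (Real.exp_pos _).le (by positivity) (by positivity) hC ?_
      · linarith [hgoal]
      · have h1 : β / 2 / 2 * ‖w‖ ^ 2 ≤ β / 2 * ‖w‖ ^ 2 := by nlinarith [sq_nonneg ‖w‖]
        have h2 := Real.exp_le_exp.mpr h1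
        have h3 := (Real.exp_pos (β / 2 * ‖v‖ ^ 2)).le
        linarith
    · have hwv : ‖w - v‖ ≤ 1 / N := by rw [norm_sub_rev, le_div_iff₀ hN]; linarith
      have hgoal := side_two (a := min (N * ‖v - w‖) 1) (b := min (N * ‖u - v‖) 1)
        (eu := Real.exp (β / 2 / 2 * ‖w‖ ^ 2))
        (A := 1 + Real.exp (β / 2 * ‖v‖ ^ 2) + Real.exp (β / 2 * ‖w‖ ^ 2))
        (B := 1 + Real.exp (β / 2 * ‖u‖ ^ 2) + Real.exp (β / 2 * ‖v‖ ^ 2))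
        (C₀ := Real.exp (β / (2 * N ^ 2)))
        (le_min (by positivity) zero_le_one) (le_min (by positivity) zero_le_one)
        (by positivity) (by positivity) ?_
      · linarith [hgoal]
      · have h1 := key w v hwv
        have h2 := (Real.exp_pos (β / 2 * ‖u‖ ^ 2)).le
        have h4 : (0:ℝ) ≤ Real.exp (β / (2 * N ^ 2)) := (Real.exp_pos _).le
        nlinarith
lemma dH_continuous (N β : ℝ) : Continuous fun p : H × H => dH N β p.1 p.2 := by
  unfold dH
  fun_prop

/-- Generalized triangle inequality for the coupling distances
associated with `d_{N,β}` on a separable Hilbert space `H`. -/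
theorem Wd_dH_triangle
    [CompleteSpace H] [TopologicalSpace.SeparableSpace H]
    [MeasurableSpace H] [BorelSpace H]
    (N β : ℝ) (hN : 0 < N) (hβ : 0 < β) :
    ∃ C > (0 : ℝ), ∀ ν₁ ν₂ ν₃ : Measure H,
      IsProbabilityMeasure ν₁ → IsProbabilityMeasure ν₂ → IsProbabilityMeasure ν₃ →
      Wd ν₁ ν₃ (dH N (β / 2)) ≤
        ENNReal.ofReal C * (Wd ν₁ ν₂ (dH N β) + Wd ν₂ ν₃ (dH N β)) := by
  have hCpos : (0:ℝ) < Real.sqrt (6 * Real.exp (β / (2 * N ^ 2))) := by positivity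
  refine ⟨Real.sqrt (6 * Real.exp (β / (2 * N ^ 2))), hCpos, ?_⟩
  intro ν₁ ν₂ ν₃ h₁ h₂ h₃
  have htri : ∀ u v w : H, dH N (β / 2) u w ≤
      Real.sqrt (6 * Real.exp (β / (2 * N ^ 2))) * (dH N β u v + dH N β v w) :=
    dH_triangle N β hN hβ
  generalize hgen : Real.sqrt (6 * Real.exp (β / (2 * N ^ 2))) = C at hCpos htri
  -- measurability facts
  have hdHmeas : ∀ γ : ℝ, Measurable fun p : H × H => ENNReal.ofReal (dH N γ p.1 p.2) :=
    fun γ => ENNReal.measurable_ofReal.comp (dH_continuous N γ).measurable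
  -- the gluing step
  have glue : ∀ r₁ r₂ : ℝ≥0∞,
      r₁ ∈ { r : ℝ≥0∞ | ∃ π : Measure (H × H), IsProbabilityMeasure π ∧
        π.map Prod.fst = ν₁ ∧ π.map Prod.snd = ν₂ ∧
        r = ∫⁻ p, ENNReal.ofReal (dH N β p.1 p.2) ∂π } →
      r₂ ∈ { r : ℝ≥0∞ | ∃ π : Measure (H × H), IsProbabilityMeasure π ∧
        π.map Prod.fst = ν₂ ∧ π.map Prod.snd = ν₃ ∧
        r = ∫⁻ p, ENNReal.ofReal (dH N β p.1 p.2) ∂π } →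
      Wd ν₁ ν₃ (dH N (β / 2)) ≤ ENNReal.ofReal C * (r₁ + r₂) := by
    rintro r₁ r₂ ⟨π₁₂, hπ₁₂p, hπ₁₂f, hπ₁₂s, rfl⟩ ⟨π₂₃, hπ₂₃p, hπ₂₃f, hπ₂₃s, rfl⟩
    haveI := hπ₁₂p; haveI := hπ₂₃p
    have hfst23 : π₂₃.fst = ν₂ := hπ₂₃f
    set κ : ProbabilityTheory.Kernel H H := π₂₃.condKernel with hκdef
    have hdis : ν₂ ⊗ₘ κ = π₂₃ := by rw [← hfst23]; exact π₂₃.disintegrate _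
    set κ' : ProbabilityTheory.Kernel (H × H) H :=
      κ.comap (Prod.snd : H × H → H) measurable_snd with hκ'def
    haveI : ProbabilityTheory.IsMarkovKernel κ' := by
      rw [hκ'def]; infer_instance
    set μ₃ : Measure ((H × H) × H) := π₁₂ ⊗ₘ κ' with hμ₃def
    haveI : IsProbabilityMeasure μ₃ := by rw [hμ₃def]; infer_instance
    have hmeasg : Measurable (fun p : (H × H) × H => (p.1.2, p.2)) :=
      measurable_fst.snd.prodMk measurable_snd
    have hmarg1 : μ₃.map Prod.fst = π₁₂ := Measure.fst_compProd π₁₂ κ'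
    have hmarg2 : μ₃.map (fun p : (H × H) × H => (p.1.2, p.2)) = π₂₃ := by
      ext s hs
      rw [Measure.map_apply hmeasg hs, ← hdis, hμ₃def,
        Measure.compProd_apply (hmeasg hs), Measure.compProd_apply hs]
      have hint : ∀ q : H × H,
          κ' q (Prod.mk q ⁻¹' ((fun p : (H × H) × H => (p.1.2, p.2)) ⁻¹' s))
            = κ q.2 (Prod.mk q.2 ⁻¹' s) := by
        intro q
        rw [hκ'def, ProbabilityTheory.Kernel.comap_apply]
        rfl
      simp_rw [hint]
      rw [← hπ₁₂s, lintegral_map (ProbabilityTheory.Kernel.measurable_kernel_prodMk_left hs)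
        measurable_snd]
    -- the candidate coupling of ν₁ and ν₃
    have hf : Measurable (fun p : (H × H) × H => (p.1.1, p.2)) :=
      measurable_fst.fst.prodMk measurable_snd
    set π : Measure (H × H) := μ₃.map (fun p => (p.1.1, p.2)) with hπdef
    haveI : IsProbabilityMeasure π := by
      rw [hπdef]; exact Measure.isProbabilityMeasure_map hf.aemeasurable
    have hπf : π.map Prod.fst = ν₁ := by
      rw [hπdef, Measure.map_map measurable_fst hf]
      rw [show (Prod.fst ∘ fun p : (H × H) × H => (p.1.1, p.2))
          = Prod.fst ∘ (Prod.fst : (H × H) × H → H × H) from rfl]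
      rw [← Measure.map_map measurable_fst measurable_fst, hmarg1, hπ₁₂f]
    have hπs : π.map Prod.snd = ν₃ := by
      rw [hπdef, Measure.map_map measurable_snd hf]
      rw [show (Prod.snd ∘ fun p : (H × H) × H => (p.1.1, p.2))
          = Prod.snd ∘ (fun p : (H × H) × H => (p.1.2, p.2)) from rfl]
      rw [← Measure.map_map measurable_snd hmeasg, hmarg2, hπ₂₃s]
    have hWd : Wd ν₁ ν₃ (dH N (β / 2)) ≤
        ∫⁻ p, ENNReal.ofReal (dH N (β / 2) p.1 p.2) ∂π :=
      sInf_le ⟨π, inferInstance, hπf, hπs, rfl⟩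
    refine le_trans hWd ?_
    have hstep : ∫⁻ p, ENNReal.ofReal (dH N (β / 2) p.1 p.2) ∂π
        = ∫⁻ q, ENNReal.ofReal (dH N (β / 2) q.1.1 q.2) ∂μ₃ := by
      rw [hπdef, lintegral_map (hdHmeas (β / 2)) hf]
    rw [hstep]
    have hptwise : ∀ q : (H × H) × H,
        ENNReal.ofReal (dH N (β / 2) q.1.1 q.2)
          ≤ ENNReal.ofReal (C * (dH N β q.1.1 q.1.2 + dH N β q.1.2 q.2)) :=
      fun q => ENNReal.ofReal_le_ofReal (htri _ _ _)
    refine le_trans (lintegral_mono hptwise) ?_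
    have heq : ∀ q : (H × H) × H,
        ENNReal.ofReal (C * (dH N β q.1.1 q.1.2 + dH N β q.1.2 q.2))
          = ENNReal.ofReal C * (ENNReal.ofReal (dH N β q.1.1 q.1.2)
              + ENNReal.ofReal (dH N β q.1.2 q.2)) := by
      intro q
      rw [ENNReal.ofReal_mul hCpos.le,
        ENNReal.ofReal_add (dH_nonneg _ _ _ _) (dH_nonneg _ _ _ _)]
    simp_rw [heq]
    have hmeas1' : Measurable fun q : (H × H) × H =>
        ENNReal.ofReal (dH N β q.1.1 q.1.2) := (hdHmeas β).comp measurable_fst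
    rw [lintegral_const_mul' _ _ ENNReal.ofReal_ne_top, lintegral_add_left hmeas1']
    have hi1 : ∫⁻ q : (H × H) × H, ENNReal.ofReal (dH N β q.1.1 q.1.2) ∂μ₃
        = ∫⁻ p, ENNReal.ofReal (dH N β p.1 p.2) ∂π₁₂ := by
      rw [← hmarg1, lintegral_map (hdHmeas β) measurable_fst]
    have hi2 : ∫⁻ q : (H × H) × H, ENNReal.ofReal (dH N β q.1.2 q.2) ∂μ₃
        = ∫⁻ p, ENNReal.ofReal (dH N β p.1 p.2) ∂π₂₃ := by
      rw [← hmarg2, lintegral_map (hdHmeas β) hmeasg]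
    rw [hi1, hi2]
  -- conclude using properties of `sInf` in `ℝ≥0∞`
  have hc0 : ENNReal.ofReal C ≠ 0 := by
    simp only [ne_eq, ENNReal.ofReal_eq_zero, not_le]
    exact hCpos
  have hct : ENNReal.ofReal C ≠ ⊤ := ENNReal.ofReal_ne_top
  simp only [Wd] at glue ⊢
  have hdiv : sInf { r : ℝ≥0∞ | ∃ π : Measure (H × H), IsProbabilityMeasure π ∧
        π.map Prod.fst = ν₁ ∧ π.map Prod.snd = ν₃ ∧
        r = ∫⁻ p, ENNReal.ofReal (dH N (β / 2) p.1 p.2) ∂π } / ENNReal.ofReal C ≤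
      sInf { r : ℝ≥0∞ | ∃ π : Measure (H × H), IsProbabilityMeasure π ∧
        π.map Prod.fst = ν₁ ∧ π.map Prod.snd = ν₂ ∧
        r = ∫⁻ p, ENNReal.ofReal (dH N β p.1 p.2) ∂π } +
      sInf { r : ℝ≥0∞ | ∃ π : Measure (H × H), IsProbabilityMeasure π ∧
        π.map Prod.fst = ν₂ ∧ π.map Prod.snd = ν₃ ∧
        r = ∫⁻ p, ENNReal.ofReal (dH N β p.1 p.2) ∂π } := by
    rw [ENNReal.sInf_add]
    refine le_iInf₂ fun r₁ hr₁ => ?_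
    rw [add_comm r₁, ENNReal.sInf_add]
    refine le_iInf₂ fun r₂ hr₂ => ?_
    rw [ENNReal.div_le_iff_le_mul (Or.inl hc0) (Or.inl hct)]
    refine le_trans (glue r₁ r₂ hr₁ hr₂) (le_of_eq ?_)
    ring
  have := (ENNReal.div_le_iff_le_mul (Or.inl hc0) (Or.inl hct)).mp hdiv
  rwa [mul_comm] at this

end
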